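/- Let n, k be positive integers and 0 < p < 1 with k < p·n, and set f = k/n. Then B_{n,k}(p) < B↑_{n,k}(p) < (√(1-f)·p/(√(2π·f)·(p-f)))·e^{-n·D(f‖p)}. -/

import Mathlib

open Real

/-- Binomial probability `b_{n,k}(p)`. -/
noncomputable def b (n k : ℕ) (p : ℝ) : ℝ :=
  (n.choose k : ℝ) * p ^ k * (1 - p) ^ (n - k)

/-- Lower tail probability `B_{n,k}(p)`. -/
noncomputable def B (n k : ℕ) (p : ℝ) : ℝ :=
  ∑ j ∈ Finset.range (k + 1), (n.choose j : ℝ) * p ^ j * (1 - p) ^ (n - j)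

/-- Relative entropy `D(f‖p)`. -/
noncomputable def D (f p : ℝ) : ℝ :=
  f * Real.log (f / p) + (1 - f) * Real.log ((1 - f) / (1 - p))

noncomputable def V (n k p a : ℝ) : ℝ :=
  a + p * (n - k + a + 1) / (p * n + p - k + a)

noncomputable def U (n k p : ℝ) : ℝ := ⨅ a : ℕ, V n k p (a : ℝ)

/-- The upper bound `B↑_{n,k}(p)`. -/
noncomputable def Bup (n k : ℕ) (p : ℝ) : ℝ :=
  Real.sqrt n * U n k p / Real.sqrt (2 * Real.pi * k * ((n : ℝ) - k)) *
    Real.exp (-(n * D ((k : ℝ) / n) p)) *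
    Real.exp (1 / (12 * n + 1) - 1 / (12 * k + 1) - 1 / (12 * ((n : ℝ) - k) + 1))

section stirlingpart
open Filter Stirling Nat

noncomputable def Ls (n : ℕ) : ℝ := Real.log (stirlingSeq n)

lemma Ls_diff_ge (m : ℕ) :
    1 / (12 * ((m:ℝ)+1) + 1) - 1 / (12 * ((m:ℝ)+2) + 1) ≤ Ls (m+1) - Ls (m+2) := by
  have h := Stirling.log_stirlingSeq_diff_hasSum m
  have h0 := le_hasSum h 0 (fun j _ => by positivity)
  have h0' : (1:ℝ)/3 * (1 / (2 * ((m:ℝ)+1) + 1)) ^ 2 ≤ Ls (m+1) - Ls (m+2) := by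
    refine le_trans (le_of_eq ?_) h0
    push_cast
    ring
  refine le_trans ?_ h0'
  have hc : (0:ℝ) < 2 * ((m:ℝ)+1) + 1 := by positivity
  have e1 : 1 / (12 * ((m:ℝ)+1) + 1) - 1 / (12 * ((m:ℝ)+2) + 1)
      = 12 / ((12 * ((m:ℝ)+1) + 1) * (12 * ((m:ℝ)+2) + 1)) := by
    field_simp
    ring
  have e2 : (1:ℝ)/3 * (1 / (2 * ((m:ℝ)+1) + 1)) ^ 2
      = 1 / (3 * (2 * ((m:ℝ)+1) + 1)^2) := by
    field_simp
  rw [e1, e2, div_le_div_iff₀ (by positivity) (by positivity)]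
  nlinarith [Nat.cast_nonneg (α := ℝ) m]

noncomputable def sstir (m : ℕ) : ℝ :=
  Ls (m+1) - Real.log (Real.sqrt Real.pi) - 1 / (12 * ((m:ℝ)+1) + 1)

lemma sstir_antitone : Antitone sstir := by
  refine antitone_nat_of_succ_le (fun m => ?_)
  have h := Ls_diff_ge m
  have : ((m:ℝ)+1+1) = ((m:ℝ)+2) := by ring
  simp only [sstir, show m+1+1 = m+2 from rfl]
  push_cast
  have h := Ls_diff_ge m
  ring_nf at h ⊢
  linarith

lemma sstir_tendsto : Tendsto sstir atTop (nhds 0) := by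
  have h1 : Tendsto (fun m : ℕ => Ls (m+1)) atTop (nhds (Real.log (Real.sqrt Real.pi))) := by
    have hcont : ContinuousAt Real.log (Real.sqrt Real.pi) :=
      Real.continuousAt_log (by positivity)
    exact (hcont.tendsto.comp Stirling.tendsto_stirlingSeq_sqrt_pi).comp
      (tendsto_add_atTop_nat 1)
  have h2 : Tendsto (fun m : ℕ => 1 / (12 * ((m:ℝ)+1) + 1)) atTop (nhds 0) := by
    refine squeeze_zero (fun m => by positivity) (fun m => ?_)
      tendsto_one_div_add_atTop_nhds_zero_nat
    rw [div_le_div_iff₀ (by positivity) (by positivity)]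
    nlinarith [Nat.cast_nonneg (α := ℝ) m]
  have h3 := (h1.sub h2).sub_const (Real.log (Real.sqrt Real.pi))
  have e : sstir = fun m : ℕ =>
      (Ls (m+1) - 1 / (12 * ((m:ℝ)+1) + 1)) - Real.log (Real.sqrt Real.pi) := by
    funext m; simp only [sstir]; ring
  rw [e]
  simpa using h3

lemma sstir_nonneg (m : ℕ) : 0 ≤ sstir m :=
  sstir_antitone.le_of_tendsto sstir_tendsto m

/-- Key Stirling bound. -/
lemma stirling_key (k m : ℕ) (hk : 1 ≤ k) (hm : 1 ≤ m) :
    Ls (k + m) - Ls k - Ls m ≤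
      (1 / (12 * ((k:ℝ)+(m:ℝ)) + 1) - 1 / (12 * (k:ℝ) + 1) - 1 / (12 * (m:ℝ) + 1))
        - Real.log (Real.sqrt Real.pi) := by
  obtain ⟨k', rfl⟩ := Nat.exists_eq_add_of_le hk
  obtain ⟨m', rfl⟩ := Nat.exists_eq_add_of_le hm
  have hs1 : sstir (k' + m' + 1) ≤ sstir k' := sstir_antitone (by omega)
  have hs2 : 0 ≤ sstir m' := sstir_nonneg m'
  have e : 1 + k' + (1 + m') = (k' + m' + 1) + 1 := by omega
  have e2 : 1 + k' = k' + 1 := by omega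
  have e3 : 1 + m' = m' + 1 := by omega
  rw [e, e2, e3]
  simp only [sstir] at hs1 hs2
  push_cast at hs1 hs2 ⊢
  ring_nf at hs1 hs2 ⊢
  linarith


lemma log_factorial (n : ℕ) (hn : 1 ≤ n) :
    Real.log (n ! : ℝ) = Ls n + 1/2 * Real.log 2 + 1/2 * Real.log n
      + n * Real.log n - n := by
  have hn0 : (0:ℝ) < n := by exact_mod_cast hn
  have h := Stirling.log_stirlingSeq_formula n
  rw [Real.log_mul (by norm_num) (ne_of_gt hn0), Real.log_div (ne_of_gt hn0) (Real.exp_ne_zero 1),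
    Real.log_exp] at h
  rw [Ls] at *
  linarith [h]

lemma log_choose (n k : ℕ) (hk : k ≤ n) :
    Real.log (n.choose k : ℝ) =
      Real.log (n ! : ℝ) - Real.log (k ! : ℝ) - Real.log (((n-k) ! : ℝ)) := by
  have h := Nat.choose_mul_factorial_mul_factorial hk
  have h' : ((n.choose k : ℝ)) * (k ! : ℝ) * ((n-k)! : ℝ) = (n ! : ℝ) := by
    exact_mod_cast h
  have h1 : (n.choose k : ℝ) ≠ 0 := by
    exact_mod_cast (Nat.choose_pos hk).ne'
  have h2 : ((k ! : ℕ) : ℝ) ≠ 0 := by exact_mod_cast (Nat.factorial_ne_zero k)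
  have h3 : (((n-k) ! : ℕ) : ℝ) ≠ 0 := by exact_mod_cast (Nat.factorial_ne_zero (n-k))
  rw [← h', Real.log_mul (by positivity) h3, Real.log_mul h1 h2]
  ring

lemma b_le_S (n k : ℕ) (hk : 0 < k) (hkn : k < n) (p : ℝ) (hp0 : 0 < p) (hp1 : p < 1) :
    b n k p ≤ Real.sqrt n / Real.sqrt (2 * Real.pi * k * ((n:ℝ) - k)) *
      Real.exp (-(n * D ((k:ℝ)/n) p)) *
      Real.exp (1/(12*(n:ℝ)+1) - 1/(12*(k:ℝ)+1) - 1/(12*((n:ℝ)-k)+1)) := by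
  set m := n - k with hm_def
  have hm : 1 ≤ m := by omega
  have hkm : k + m = n := by omega
  have hMr : (m:ℝ) = (n:ℝ) - (k:ℝ) := by
    rw [hm_def]; push_cast [Nat.cast_sub hkn.le]; ring
  have hN0 : (0:ℝ) < n := by exact_mod_cast hk.trans hkn
  have hK0 : (0:ℝ) < k := by exact_mod_cast hk
  have hM0 : (0:ℝ) < m := by exact_mod_cast hm
  have hq0 : (0:ℝ) < 1 - p := by linarith
  rw [← hMr]
  -- expand n * D
  have h1 : 1 - (k:ℝ)/n = (m:ℝ)/n := by rw [hMr]; field_simp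
  have hD : (n:ℝ) * D ((k:ℝ)/(n:ℝ)) p
      = (k:ℝ)*(Real.log k - Real.log n - Real.log p)
        + (m:ℝ)*(Real.log m - Real.log n - Real.log (1-p)) := by
    rw [D, h1, Real.log_div (div_ne_zero hK0.ne' hN0.ne') hp0.ne',
      Real.log_div hK0.ne' hN0.ne',
      Real.log_div (div_ne_zero hM0.ne' hN0.ne') hq0.ne',
      Real.log_div hM0.ne' hN0.ne']
    field_simp
  have hbpos : 0 < b n k p := by
    rw [b]
    have : (0:ℝ) < (n.choose k : ℝ) := by exact_mod_cast Nat.choose_pos hkn.le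
    positivity
  have hchoosene : ((n.choose k : ℕ) : ℝ) ≠ 0 := by
    exact_mod_cast (Nat.choose_pos hkn.le).ne'
  have hlogb : Real.log (b n k p) =
      (Ls n + 1/2 * Real.log 2 + 1/2 * Real.log n + n * Real.log n - n)
      - (Ls k + 1/2 * Real.log 2 + 1/2 * Real.log k + k * Real.log k - k)
      - (Ls m + 1/2 * Real.log 2 + 1/2 * Real.log m + m * Real.log m - m)
      + k * Real.log p + m * Real.log (1-p) := by
    rw [b, Real.log_mul (by positivity) (by positivity),
      Real.log_mul hchoosene (by positivity), Real.log_pow, Real.log_pow,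
      log_choose n k hkn.le, ← hm_def,
      log_factorial n (by omega), log_factorial k (by omega), log_factorial m (by omega)]
    try ring
  have hsqpos : (0:ℝ) < Real.sqrt (2 * Real.pi * (k:ℝ) * (m:ℝ)) := by
    have := Real.pi_pos
    apply Real.sqrt_pos.mpr
    positivity
  have hlogRHS : Real.log (Real.sqrt n / Real.sqrt (2 * Real.pi * k * (m:ℝ)) *
      Real.exp (-(n * D ((k:ℝ)/n) p)) *
      Real.exp (1/(12*(n:ℝ)+1) - 1/(12*(k:ℝ)+1) - 1/(12*(m:ℝ)+1))) =
      1/2 * Real.log n - 1/2 * (Real.log 2 + Real.log Real.pi + Real.log k + Real.log m)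
      - ((k:ℝ)*(Real.log k - Real.log n - Real.log p)
          + (m:ℝ)*(Real.log m - Real.log n - Real.log (1-p)))
      + (1/(12*(n:ℝ)+1) - 1/(12*(k:ℝ)+1) - 1/(12*(m:ℝ)+1)) := by
    have hpi := Real.pi_pos
    rw [Real.log_mul (by positivity) (Real.exp_ne_zero _),
      Real.log_mul (by positivity) (Real.exp_ne_zero _),
      Real.log_exp, Real.log_exp,
      Real.log_div (by positivity) hsqpos.ne',
      Real.log_sqrt hN0.le, Real.log_sqrt (by positivity),
      Real.log_mul (by positivity) hM0.ne',
      Real.log_mul (by positivity) hK0.ne',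
      Real.log_mul (by norm_num) hpi.ne', hD]
    try ring
  have hRHSpos : 0 < Real.sqrt n / Real.sqrt (2 * Real.pi * k * (m:ℝ)) *
      Real.exp (-(n * D ((k:ℝ)/n) p)) *
      Real.exp (1/(12*(n:ℝ)+1) - 1/(12*(k:ℝ)+1) - 1/(12*(m:ℝ)+1)) := by
    have h1 : (0:ℝ) < Real.sqrt n := Real.sqrt_pos.mpr hN0
    positivity
  rw [← Real.log_le_log_iff hbpos hRHSpos, hlogb, hlogRHS]
  have key := stirling_key k m hk hm
  have hsp : Real.log (Real.sqrt Real.pi) = Real.log Real.pi / 2 :=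
    Real.log_sqrt Real.pi_pos.le
  rw [hsp] at key
  rw [← hkm]
  push_cast
  linarith [key]

end stirlingpart

section combpart
open Filter

section comb

variable (n k : ℕ) (p : ℝ)

lemma b_pos (hp0 : 0 < p) (hp1 : p < 1) {j : ℕ} (hj : j ≤ n) : 0 < b n j p := by
  have : (0:ℝ) < (n.choose j : ℝ) := by exact_mod_cast Nat.choose_pos hj
  unfold b
  have h1 : (0:ℝ) < 1 - p := by linarith
  positivity

lemma b_ratio {j : ℕ} (hj : j < n) :
    b n j p * (p * ((n:ℝ) - j)) = b n (j+1) p * ((1-p) * ((j:ℝ)+1)) := by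
  unfold b
  have h := Nat.choose_succ_right_eq n j
  have hcast : ((n.choose (j+1) : ℕ) : ℝ) * ((j:ℝ)+1) = (n.choose j : ℝ) * ((n:ℝ) - j) := by
    have := congrArg (Nat.cast : ℕ → ℝ) h
    push_cast [Nat.cast_sub hj.le] at this
    linarith [this]
  have he : n - j = (n - (j+1)) + 1 := by omega
  rw [he, pow_succ, pow_succ]
  linear_combination (-(p ^ j * (1 - p) ^ (n - (j+1)) * (1 - p) * p)) * hcast

variable (hp0 : 0 < p) (hp1 : p < 1) (hkn : k < n) (hkp : (k : ℝ) < p * n)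

include hp0 hp1 hkn hkp in
lemma b_lt_succ {j : ℕ} (hj1 : j + 1 ≤ k) : b n j p < b n (j+1) p := by
  have hr := b_ratio n p (show j < n by omega)
  have hb1 : 0 < b n (j+1) p := b_pos n p hp0 hp1 (by omega)
  have hP : (0:ℝ) < p * ((n:ℝ) - j) := by
    have : (j:ℝ) < n := by exact_mod_cast (show j < n by omega)
    nlinarith
  have hjk : ((j:ℝ)+1) ≤ k := by exact_mod_cast hj1
  have hlt : (1-p) * ((j:ℝ)+1) < p * ((n:ℝ) - j) := by nlinarith
  nlinarith [mul_pos hb1 (sub_pos.mpr hlt)]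

include hp0 hp1 hkn hkp in
lemma b_mono {i j : ℕ} (hij : i ≤ j) (hjk : j ≤ k) : b n i p ≤ b n j p := by
  induction j with
  | zero => simp_all
  | succ j ih =>
    rcases Nat.eq_or_lt_of_le hij with h | h
    · rw [h]
    · exact le_trans (ih (by omega) (by omega))
        (b_lt_succ n k p hp0 hp1 hkn hkp (by omega)).le

end comb

section main

variable {n k : ℕ} {p : ℝ}
variable (hp0 : 0 < p) (hp1 : p < 1) (hkn : k < n) (hkp : (k : ℝ) < p * n) (hk : 0 < k)

set_option maxHeartbeats 1000000 in
include hp0 hp1 hkn hkp hk in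
lemma sum_head_lt (c : ℕ) (hc1 : 1 ≤ c) (hck : c ≤ k) :
    ∑ j ∈ Finset.range (c+1), b n j p <
      b n c p * (p * ((n:ℝ) - c + 1) / (p * n + p - c)) := by
  set q : ℝ := 1 - p with hq_def
  have hq0 : 0 < q := by simp [hq_def]; linarith
  have hC : (c:ℝ) ≤ k := by exact_mod_cast hck
  have hcn : (c:ℝ) < n := by exact_mod_cast (show c < n by omega)
  have hC1 : (1:ℝ) ≤ c := by exact_mod_cast hc1
  set r : ℝ := (c:ℝ) * q / (((n:ℝ) - c + 1) * p) with hr_def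
  have hdenpos : (0:ℝ) < ((n:ℝ) - c + 1) * p := by nlinarith
  have hr0 : 0 < r := by
    rw [hr_def]; positivity
  have hnum : (0:ℝ) < p * (n:ℝ) + p - c := by nlinarith
  have hr1 : r < 1 := by
    rw [hr_def, div_lt_one hdenpos, hq_def]; nlinarith
  -- step bound
  have hstep : ∀ j : ℕ, j + 1 ≤ c → b n j p ≤ b n (j+1) p * r := by
    intro j hj
    have hjn : j < n := by omega
    have hr := b_ratio n p hjn
    have hb1 : 0 < b n (j+1) p := b_pos n p hp0 hp1 (by omega)
    have hjc : ((j:ℝ)+1) ≤ c := by exact_mod_cast hj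
    have hP : (0:ℝ) < p * ((n:ℝ) - j) := by
      have : (j:ℝ) < n := by exact_mod_cast (show j < n by omega)
      nlinarith
    have hrP : q * ((j:ℝ)+1) ≤ r * (p * ((n:ℝ) - j)) := by
      rw [hr_def, div_mul_eq_mul_div, le_div_iff₀ hdenpos]
      nlinarith [mul_nonneg (mul_nonneg hq0.le hp0.le)
        (mul_nonneg (by nlinarith : (0:ℝ) ≤ (n:ℝ)+1) (by nlinarith : (0:ℝ) ≤ (c:ℝ)-((j:ℝ)+1)))]
    have h2 : b n j p * (p*((n:ℝ)-j)) ≤ b n (j+1) p * r * (p*((n:ℝ)-j)) := by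
      rw [hr, hq_def] at *
      nlinarith [mul_le_mul_of_nonneg_left hrP hb1.le]
    exact le_of_mul_le_mul_right h2 hP
  -- geometric bound
  have hgeom : ∀ i : ℕ, i ≤ c → b n (c - i) p ≤ b n c p * r ^ i := by
    intro i
    induction i with
    | zero => intro _; simp
    | succ i ih =>
      intro hi
      have hj : (c - (i+1)) + 1 = c - i := by omega
      calc b n (c - (i+1)) p ≤ b n ((c - (i+1)) + 1) p * r :=
            hstep _ (by omega)
        _ = b n (c - i) p * r := by rw [hj]
        _ ≤ (b n c p * r ^ i) * r :=
            mul_le_mul_of_nonneg_right (ih (by omega)) hr0.le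
        _ = b n c p * r ^ (i+1) := by rw [pow_succ]; ring
  have hsum1 : ∑ j ∈ Finset.range (c+1), b n j p ≤
      b n c p * ∑ i ∈ Finset.range (c+1), r ^ i := by
    rw [← Finset.sum_range_reflect (fun j => b n j p) (c+1), Finset.mul_sum]
    refine Finset.sum_le_sum (fun i hi => ?_)
    have hi' : i ≤ c := by
      simp only [Finset.mem_range] at hi; omega
    have he : c + 1 - 1 - i = c - i := by omega
    rw [he]
    exact hgeom i hi'
  have h1r : (0:ℝ) < 1 - r := by linarith
  have hsumgeom : ∑ i ∈ Finset.range (c+1), r ^ i < 1 / (1 - r) := by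
    have hgs : (∑ i ∈ Finset.range (c+1), r ^ i) * (1 - r) = 1 - r^(c+1) := by
      linear_combination -(geom_sum_mul r (c+1))
    rw [lt_div_iff₀ h1r]
    nlinarith [pow_pos hr0 (c+1)]
  have hbc : 0 < b n c p := b_pos n p hp0 hp1 (by omega)
  have e2 : 1/(1-r) = p*((n:ℝ)-c+1)/(p*(n:ℝ)+p-(c:ℝ)) := by
    have e1 : 1 - r = (p*(n:ℝ)+p-(c:ℝ))/(((n:ℝ)-(c:ℝ)+1)*p) := by
      rw [hr_def, hq_def]
      field_simp [show ((n:ℝ)-(c:ℝ)+1) ≠ 0 by linarith]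
      ring
    rw [e1, one_div_div]
    ring
  calc ∑ j ∈ Finset.range (c+1), b n j p
      ≤ b n c p * ∑ i ∈ Finset.range (c+1), r ^ i := hsum1
    _ < b n c p * (1/(1-r)) := by
        exact mul_lt_mul_of_pos_left hsumgeom hbc
    _ = b n c p * (p * ((n:ℝ) - c + 1) / (p * n + p - c)) := by rw [e2]

end main

section main2

variable {n k : ℕ} {p : ℝ}
variable (hp0 : 0 < p) (hp1 : p < 1) (hkn : k < n) (hkp : (k : ℝ) < p * n) (hk : 0 < k)

include hp0 hp1 hkn hkp hk in
lemma frac_pos (a : ℕ) : 0 < p * ((n:ℝ) - k + a + 1) / (p * n + p - k + a) := by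
  have h1 : (0:ℝ) ≤ (n:ℝ) - k := by
    have : (k:ℝ) ≤ n := by exact_mod_cast hkn.le
    linarith
  have h2 : (0:ℝ) < p * n + p - k + a := by
    have : (0:ℝ) ≤ (a:ℝ) := Nat.cast_nonneg a
    nlinarith
  have h3 : (0:ℝ) ≤ (a:ℝ) := Nat.cast_nonneg a
  positivity

include hp0 hp1 hkn hkp hk in
lemma V_ge (a : ℕ) : (a:ℝ) ≤ V n k p a := by
  have := frac_pos hp0 hp1 hkn hkp hk (n := n) (k := k) a
  rw [V]; linarith

include hp0 hp1 hkn hkp hk in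
lemma V_bdd : BddBelow (Set.range fun a : ℕ => V n k p (a:ℝ)) := by
  refine ⟨0, fun x hx => ?_⟩
  obtain ⟨a, rfl⟩ := hx
  exact le_trans (Nat.cast_nonneg a) (V_ge hp0 hp1 hkn hkp hk a)

include hp0 hp1 hkn hkp hk in
lemma U_attained : ∃ a₀ : ℕ, U n k p = V n k p a₀ ∧ ∀ a : ℕ, V n k p (a₀:ℝ) ≤ V n k p (a:ℝ) := by
  classical
  set M := ⌈V (n:ℝ) k p 0⌉₊ with hM
  obtain ⟨a₀, ha₀mem, ha₀min⟩ := Finset.exists_min_image (Finset.range (M+1))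
    (fun a : ℕ => V n k p (a:ℝ)) ⟨0, by simp⟩
  have hmin : ∀ a : ℕ, V n k p (a₀:ℝ) ≤ V n k p (a:ℝ) := by
    intro a
    by_cases ha : a ∈ Finset.range (M+1)
    · exact ha₀min a ha
    · have haM : M + 1 ≤ a := by
        simp only [Finset.mem_range, not_lt] at ha; omega
      have h1 : ((M:ℝ)) + 1 ≤ a := by exact_mod_cast haM
      have h2 : V (n:ℝ) k p 0 ≤ M := Nat.le_ceil _
      have h3 := V_ge hp0 hp1 hkn hkp hk (n := n) (k := k) a
      have h4 : V (n:ℝ) k p (a₀:ℝ) ≤ V (n:ℝ) k p ((0:ℕ):ℝ) := ha₀min 0 (by simp)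
      push_cast at h4
      linarith
  refine ⟨a₀, le_antisymm (ciInf_le (V_bdd hp0 hp1 hkn hkp hk) a₀) (le_ciInf hmin), hmin⟩

include hp0 hp1 hkn hkp hk in
lemma U_pos : 0 < U n k p := by
  obtain ⟨a₀, hU, _⟩ := U_attained hp0 hp1 hkn hkp hk (n := n) (k := k) (p := p)
  rw [hU, V]
  have := frac_pos hp0 hp1 hkn hkp hk (n := n) (k := k) a₀
  have : (0:ℝ) ≤ (a₀:ℝ) := Nat.cast_nonneg a₀
  have := frac_pos hp0 hp1 hkn hkp hk (n := n) (k := k) a₀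
  linarith

include hp0 hp1 hkn hkp hk in
lemma B_lt_bV (a : ℕ) : B n k p < b n k p * V n k p a := by
  have hBsum : B n k p = ∑ j ∈ Finset.range (k+1), b n j p := rfl
  have hbk : 0 < b n k p := b_pos n p hp0 hp1 hkn.le
  have hNK : (0:ℝ) ≤ (n:ℝ) - k := by
    have : (k:ℝ) ≤ n := by exact_mod_cast hkn.le
    linarith
  rcases Nat.lt_or_ge a k with hak | hak
  · -- a < k
    set c := k - a with hc_def
    have hc1 : 1 ≤ c := by omega
    have hck : c ≤ k := by omega
    have hcR : (c:ℝ) = (k:ℝ) - (a:ℝ) := by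
      rw [hc_def]; push_cast [Nat.cast_sub hak.le]; ring
    have hsplit : ∑ j ∈ Finset.range (k+1), b n j p =
        (∑ j ∈ Finset.range (c+1), b n j p) +
        ∑ j ∈ Finset.Ico (c+1) (k+1), b n j p := by
      rw [Finset.range_eq_Ico, ← Finset.sum_Ico_consecutive _ (Nat.zero_le (c+1)) (by omega : c+1 ≤ k+1), ← Finset.range_eq_Ico]
    have htail : ∑ j ∈ Finset.Ico (c+1) (k+1), b n j p ≤ (a:ℝ) * b n k p := by
      calc ∑ j ∈ Finset.Ico (c+1) (k+1), b n j p
          ≤ ∑ _j ∈ Finset.Ico (c+1) (k+1), b n k p := by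
            refine Finset.sum_le_sum (fun j hj => ?_)
            have hj' := Finset.mem_Ico.mp hj
            exact b_mono n k p hp0 hp1 hkn hkp (by omega) (by omega)
        _ = (a:ℝ) * b n k p := by
            rw [Finset.sum_const, Nat.card_Ico]
            have : k + 1 - (c + 1) = a := by omega
            rw [this, nsmul_eq_mul]
    have hfracpos : 0 < p * ((n:ℝ) - c + 1) / (p * n + p - c) := by
      have h2 : (0:ℝ) < p * n + p - c := by
        have : (c:ℝ) ≤ k := by exact_mod_cast hck
        nlinarith
      have h1 : (0:ℝ) < (n:ℝ) - c + 1 := by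
        have : (c:ℝ) ≤ k := by exact_mod_cast hck
        nlinarith
      positivity
    have hhead := sum_head_lt hp0 hp1 hkn hkp hk c hc1 hck
    have hbc : b n c p ≤ b n k p := b_mono n k p hp0 hp1 hkn hkp (by omega) le_rfl
    have hhead2 : ∑ j ∈ Finset.range (c+1), b n j p <
        b n k p * (p * ((n:ℝ) - c + 1) / (p * n + p - c)) := by
      calc ∑ j ∈ Finset.range (c+1), b n j p
          < b n c p * (p * ((n:ℝ) - c + 1) / (p * n + p - c)) := hhead
        _ ≤ b n k p * (p * ((n:ℝ) - c + 1) / (p * n + p - c)) :=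
            mul_le_mul_of_nonneg_right hbc hfracpos.le
    have hVeq : b n k p * V n k p a =
        b n k p * (p * ((n:ℝ) - c + 1) / (p * n + p - c)) + (a:ℝ) * b n k p := by
      rw [V, hcR]
      ring_nf
    rw [hBsum, hsplit, hVeq]
    linarith
  · -- a ≥ k
    have hstrict : B n k p < ((k:ℝ)+1) * b n k p := by
      rw [hBsum]
      have h1 : ∑ j ∈ Finset.range (k+1), b n j p <
          ∑ _j ∈ Finset.range (k+1), b n k p := by
        refine Finset.sum_lt_sum (fun j hj => ?_) ⟨0, by simp, ?_⟩
        · exact b_mono n k p hp0 hp1 hkn hkp (by simp at hj; omega) le_rfl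
        · calc b n 0 p < b n 1 p := b_lt_succ n k p hp0 hp1 hkn hkp (by omega)
            _ ≤ b n k p := b_mono n k p hp0 hp1 hkn hkp (by omega) le_rfl
      rw [Finset.sum_const, Finset.card_range, nsmul_eq_mul] at h1
      push_cast at h1 ⊢
      linarith
    have hV : (k:ℝ) + 1 ≤ V n k p a := by
      rcases Nat.eq_or_lt_of_le hak with h | h
      · subst h
        have hden : (0:ℝ) < p * n + p := by positivity
        have heq1 : p * ((n:ℝ) - k + k + 1) / (p * n + p - k + k) = 1 := by
          rw [div_eq_one_iff_eq (by nlinarith)]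
          ring
        rw [V, heq1]
      · have h1 : ((k:ℝ))+1 ≤ a := by exact_mod_cast h
        have := frac_pos hp0 hp1 hkn hkp hk (n := n) (k := k) a
        rw [V]
        linarith
    calc B n k p < ((k:ℝ)+1) * b n k p := hstrict
      _ ≤ V n k p a * b n k p := mul_le_mul_of_nonneg_right hV hbk.le
      _ = b n k p * V n k p a := by ring

end main2

end combpart

theorem binomial_tail_upper_bound_asymptotic
    (n k : ℕ) (hn : 0 < n) (hk : 0 < k) (p : ℝ) (hp0 : 0 < p) (hp1 : p < 1)
    (hkp : (k : ℝ) < p * n) :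
    B n k p < Bup n k p ∧
    Bup n k p < Real.sqrt (1 - (k : ℝ) / n) * p /
        (Real.sqrt (2 * Real.pi * ((k : ℝ) / n)) * (p - (k : ℝ) / n)) *
        Real.exp (-(n * D ((k : ℝ) / n) p)) := by
  have hknR : (k:ℝ) < n := by nlinarith
  have hkn : k < n := by exact_mod_cast hknR
  have hN0 : (0:ℝ) < n := by exact_mod_cast hn
  have hK0 : (0:ℝ) < k := by exact_mod_cast hk
  have hq0 : (0:ℝ) < 1 - p := by linarith
  have hNK1 : (1:ℝ) ≤ (n:ℝ) - k := by
    have : ((k:ℝ) + 1) ≤ n := by exact_mod_cast hkn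
    linarith
  have hpi := Real.pi_pos
  have hU0 : 0 < U n k p := U_pos hp0 hp1 hkn hkp hk
  have hEpos : 0 < Real.exp (-(n * D ((k : ℝ) / n) p)) := Real.exp_pos _
  have hNKpos : (0:ℝ) < (n:ℝ) - k := by linarith
  have hS2pos : (0:ℝ) < Real.sqrt (2 * Real.pi * k * ((n:ℝ) - k)) := by
    apply Real.sqrt_pos.mpr; positivity
  constructor
  · -- part 1
    obtain ⟨a₀, hUeq, _⟩ := U_attained hp0 hp1 hkn hkp hk (n := n) (k := k) (p := p)
    have h1 : B n k p < b n k p * U n k p := by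
      rw [hUeq]; exact B_lt_bV hp0 hp1 hkn hkp hk a₀
    have h2 := b_le_S n k hk hkn p hp0 hp1
    have h3 : b n k p * U n k p ≤ (Real.sqrt n / Real.sqrt (2 * Real.pi * k * ((n:ℝ) - k)) *
        Real.exp (-(n * D ((k:ℝ)/n) p)) *
        Real.exp (1/(12*(n:ℝ)+1) - 1/(12*(k:ℝ)+1) - 1/(12*((n:ℝ)-k)+1))) * U n k p :=
      mul_le_mul_of_nonneg_right h2 hU0.le
    have hBup : Bup n k p = (Real.sqrt n / Real.sqrt (2 * Real.pi * k * ((n:ℝ) - k)) *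
        Real.exp (-(n * D ((k:ℝ)/n) p)) *
        Real.exp (1/(12*(n:ℝ)+1) - 1/(12*(k:ℝ)+1) - 1/(12*((n:ℝ)-k)+1))) * U n k p := by
      rw [Bup]; ring
    rw [hBup]
    exact lt_of_lt_of_le h1 h3
  · -- part 2
    have hpnk : (0:ℝ) < p * n - k := by linarith
    have hecond : (1/(12*(n:ℝ)+1) - 1/(12*(k:ℝ)+1) - 1/(12*((n:ℝ)-k)+1)) < 0 := by
      have h1 : 1/(12*(n:ℝ)+1) ≤ 1/(12*(k:ℝ)+1) := by
        apply one_div_le_one_div_of_le (by positivity)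
        linarith
      have h2 : 0 < 1/(12*((n:ℝ)-k)+1) := by positivity
      linarith
    have hec1 : Real.exp (1/(12*(n:ℝ)+1) - 1/(12*(k:ℝ)+1) - 1/(12*((n:ℝ)-k)+1)) < 1 :=
      Real.exp_lt_one_iff.mpr hecond
    have hV0 : U n k p ≤ V n k p ((0:ℕ):ℝ) := ciInf_le (V_bdd hp0 hp1 hkn hkp hk) 0
    have hV0val : V n k p ((0:ℕ):ℝ) = p * ((n:ℝ) - k + 1) / (p * n + p - k) := by
      rw [V]; push_cast; ring_nf
    set T : ℝ := Real.sqrt n * p * ((n:ℝ) - k) / (p * n - k) with hT_def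
    have hsn1 : (1:ℝ) ≤ Real.sqrt n := by
      rw [show (1:ℝ) = Real.sqrt 1 by simp]
      exact Real.sqrt_le_sqrt (by exact_mod_cast hn)
    have hVT : V n k p ((0:ℕ):ℝ) < T := by
      rw [hV0val, hT_def]
      have hd1 : (0:ℝ) < p * n + p - k := by linarith
      rw [div_lt_div_iff₀ hd1 hpnk]
      have hfact : p * ((n:ℝ)-k) * (p*n+p-k) - p * ((n:ℝ)-k+1) * (p*n-k) = p*k*(1-p) := by
        ring
      have hX : (0:ℝ) ≤ p*((n:ℝ)-k)*(p*n+p-k) := by positivity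
      nlinarith [mul_le_mul_of_nonneg_right hsn1 hX, mul_pos (mul_pos hp0 hK0) hq0]
    have hUec : U n k p * Real.exp (1/(12*(n:ℝ)+1) - 1/(12*(k:ℝ)+1) - 1/(12*((n:ℝ)-k)+1)) < T := by
      calc U n k p * Real.exp (1/(12*(n:ℝ)+1) - 1/(12*(k:ℝ)+1) - 1/(12*((n:ℝ)-k)+1))
          < U n k p * 1 := by
            exact mul_lt_mul_of_pos_left hec1 hU0
        _ = U n k p := mul_one _
        _ ≤ V n k p ((0:ℕ):ℝ) := hV0
        _ < T := hVT
    -- coefficient equality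
    have hsq : Real.sqrt (n:ℝ) * Real.sqrt (n:ℝ) = (n:ℝ) := Real.mul_self_sqrt hN0.le
    have hRHSco : Real.sqrt (1 - (k : ℝ) / n) * p /
        (Real.sqrt (2 * Real.pi * ((k : ℝ) / n)) * (p - (k : ℝ) / n)) =
        T * (Real.sqrt n / Real.sqrt (2 * Real.pi * k * ((n:ℝ) - k))) := by
      have e1 : 1 - (k:ℝ)/n = ((n:ℝ) - k)/n := by field_simp
      have e2 : 2 * Real.pi * ((k:ℝ)/n) = (2 * Real.pi * k)/n := by ring
      have e3 : p - (k:ℝ)/n = (p * n - k)/n := by field_simp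
      have e4 : Real.sqrt (2 * Real.pi * k * ((n:ℝ) - k)) =
          Real.sqrt (2 * Real.pi * k) * Real.sqrt ((n:ℝ) - k) :=
        Real.sqrt_mul (by positivity) _
      have hsk : (0:ℝ) < Real.sqrt (2 * Real.pi * k) := Real.sqrt_pos.mpr (by positivity)
      have hsN : (0:ℝ) < Real.sqrt ((n:ℝ)) := Real.sqrt_pos.mpr hN0
      have hsNK : (0:ℝ) < Real.sqrt ((n:ℝ) - k) := Real.sqrt_pos.mpr hNKpos
      have hsqNK : Real.sqrt ((n:ℝ) - k) * Real.sqrt ((n:ℝ) - k) = (n:ℝ) - k :=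
        Real.mul_self_sqrt hNKpos.le
      rw [hT_def, e1, e2, e3, e4, Real.sqrt_div hNKpos.le,
        Real.sqrt_div (by positivity : (0:ℝ) ≤ 2*Real.pi*(k:ℝ))]
      set aa := Real.sqrt ((n:ℝ)) with haa
      set bb := Real.sqrt ((n:ℝ) - k) with hbb
      set cc := Real.sqrt (2 * Real.pi * (k:ℝ)) with hcc
      rw [← hsqNK]
      rw [← hsq] at hpnk ⊢
      have hdne : p*(aa*aa) - (k:ℝ) ≠ 0 := ne_of_gt hpnk
      field_simp [hdne]
    have hsN : (0:ℝ) < Real.sqrt ((n:ℝ)) := Real.sqrt_pos.mpr hN0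
    have hco : Real.sqrt n * U n k p / Real.sqrt (2 * Real.pi * k * ((n:ℝ) - k)) *
        Real.exp (1/(12*(n:ℝ)+1) - 1/(12*(k:ℝ)+1) - 1/(12*((n:ℝ)-k)+1)) <
        T * (Real.sqrt n / Real.sqrt (2 * Real.pi * k * ((n:ℝ) - k))) := by
      have e : Real.sqrt n * U n k p / Real.sqrt (2 * Real.pi * k * ((n:ℝ) - k)) *
          Real.exp (1/(12*(n:ℝ)+1) - 1/(12*(k:ℝ)+1) - 1/(12*((n:ℝ)-k)+1)) =
          (U n k p * Real.exp (1/(12*(n:ℝ)+1) - 1/(12*(k:ℝ)+1) - 1/(12*((n:ℝ)-k)+1))) *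
          (Real.sqrt n / Real.sqrt (2 * Real.pi * k * ((n:ℝ) - k))) := by ring
      rw [e]
      exact mul_lt_mul_of_pos_right hUec (div_pos hsN hS2pos)
    calc Bup n k p
        = (Real.sqrt n * U n k p / Real.sqrt (2 * Real.pi * k * ((n:ℝ) - k)) *
            Real.exp (1/(12*(n:ℝ)+1) - 1/(12*(k:ℝ)+1) - 1/(12*((n:ℝ)-k)+1))) *
            Real.exp (-(n * D ((k:ℝ)/n) p)) := by
          rw [Bup]; ring
      _ < (T * (Real.sqrt n / Real.sqrt (2 * Real.pi * k * ((n:ℝ) - k)))) *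
            Real.exp (-(n * D ((k:ℝ)/n) p)) :=
          mul_lt_mul_of_pos_right hco hEpos
      _ = Real.sqrt (1 - (k : ℝ) / n) * p /
            (Real.sqrt (2 * Real.pi * ((k : ℝ) / n)) * (p - (k : ℝ) / n)) *
            Real.exp (-(n * D ((k : ℝ) / n) p)) := by
          rw [hRHSco]
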